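/- arXiv:0712.2423 — 4 statements merged into one kernel-verified Lean document; each statement's English description precedes it below -/
import Mathlib

section
/- If ξ ∈ ℝ is δ-badly approximable (i.e. inf over positive integers p of p·‖pξ‖ ≥ δ, where ‖·‖ denotes distance to the nearest integer), δ ∈ (0, 1/2), β ∈ [0,1], α = 1 - β, and p is a positive integer, then the number of integers x with p < x ≤ 2p and ‖xξ‖ ≤ δ / (p · log(p+1))^β is at most (24δ + 2) · p^α / (log(p+1))^β. -/
open MeasureTheory Real

/-- Distance from a real number to the nearest integer. -/
noncomputable def nint (t : ℝ) : ℝ := |t - round t|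

lemma nint_le_abs (t : ℝ) (n : ℤ) : nint t ≤ |t - n| := round_le t n

set_option maxHeartbeats 2000000 in
theorem stmt0 (ξ δ α β : ℝ) (hδ0 : 0 < δ) (hδ1 : δ < 1/2)
    (hbad : ∀ p : ℕ, 0 < p → δ ≤ (p : ℝ) * nint ((p : ℝ) * ξ))
    (hβ0 : 0 ≤ β) (hβ1 : β ≤ 1) (hα : α = 1 - β)
    (p : ℕ) (hp : 0 < p) :
    (((Finset.Ioc p (2 * p)).filter
        (fun x : ℕ => nint ((x : ℝ) * ξ) ≤ δ / (((p : ℝ) * Real.log (p + 1)) ^ β))).card : ℝ)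
      ≤ (24 * δ + 2) * (p : ℝ) ^ α / (Real.log (p + 1)) ^ β := by
  have hpR : (0 : ℝ) < p := by exact_mod_cast hp
  have hp1 : (1 : ℝ) < (p : ℝ) + 1 := by linarith
  set L : ℝ := Real.log ((p : ℝ) + 1) with hLdef
  have hL : 0 < L := Real.log_pos hp1
  set E : ℝ := ((p : ℝ) * L) ^ β with hEdef
  have hE : 0 < E := Real.rpow_pos_of_pos (mul_pos hpR hL) β
  set S : Finset ℕ := (Finset.Ioc p (2 * p)).filter
      (fun x : ℕ => nint ((x : ℝ) * ξ) ≤ δ / E) with hSdef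
  have hRHS : (24 * δ + 2) * (p : ℝ) ^ α / L ^ β = (24 * δ + 2) * ((p : ℝ) / E) := by
    have hpβ : (0 : ℝ) < (p : ℝ) ^ β := Real.rpow_pos_of_pos hpR β
    have hLβ : (0 : ℝ) < L ^ β := Real.rpow_pos_of_pos hL β
    rw [hα, hEdef, Real.mul_rpow hpR.le hL.le, Real.rpow_sub hpR, Real.rpow_one]
    field_simp
  rw [hRHS]
  have hmem : ∀ x ∈ S, (p < x ∧ x ≤ 2 * p) ∧ nint ((x : ℝ) * ξ) ≤ δ / E := by
    intro x hx
    rw [hSdef, Finset.mem_filter, Finset.mem_Ioc] at hx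
    exact hx
  -- separation lemma
  have hsep : ∀ x ∈ S, ∀ y ∈ S, x < y →
      δ / (p : ℝ) < |((y : ℝ) * ξ - round ((y : ℝ) * ξ)) - ((x : ℝ) * ξ - round ((x : ℝ) * ξ))| := by
    intro x hx y hy hxy
    obtain ⟨⟨hpx, hx2p⟩, hxε⟩ := hmem x hx
    obtain ⟨⟨hpy, hy2p⟩, hyε⟩ := hmem y hy
    set d : ℕ := y - x with hd
    have hd0 : 0 < d := by omega
    have hdp : d + 1 ≤ p := by omega
    have hdcast : (d : ℝ) = (y : ℝ) - x := by
      rw [hd]; push_cast [Nat.cast_sub hxy.le]; ring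
    have hdpR : (d : ℝ) ≤ (p : ℝ) - 1 := by
      have : ((d : ℝ)) + 1 ≤ (p : ℝ) := by exact_mod_cast hdp
      linarith
    have hbd := hbad d hd0
    have h1 : nint ((d : ℝ) * ξ) ≤
        |((y : ℝ) * ξ - round ((y : ℝ) * ξ)) - ((x : ℝ) * ξ - round ((x : ℝ) * ξ))| := by
      have h2 := nint_le_abs ((d : ℝ) * ξ) (round ((y : ℝ) * ξ) - round ((x : ℝ) * ξ))
      have h3 : (d : ℝ) * ξ - ((round ((y : ℝ) * ξ) - round ((x : ℝ) * ξ) : ℤ) : ℝ)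
          = ((y : ℝ) * ξ - round ((y : ℝ) * ξ)) - ((x : ℝ) * ξ - round ((x : ℝ) * ξ)) := by
        push_cast
        rw [hdcast]; ring
      rwa [h3] at h2
    by_contra hcon
    push_neg at hcon
    have hnn : (0:ℝ) ≤ nint ((d : ℝ) * ξ) := abs_nonneg _
    have hdnn : (0:ℝ) ≤ (d:ℝ) := by positivity
    have hδp : 0 < δ / (p:ℝ) := by positivity
    have : δ ≤ (d : ℝ) * (δ / p) := le_trans hbd (by
      have := h1.trans hcon
      nlinarith)
    have h4 : (d : ℝ) * (δ / p) ≤ ((p:ℝ) - 1) * (δ / p) := by nlinarith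
    have h5 : ((p:ℝ) - 1) * (δ / p) < δ := by
      have : ((p:ℝ) - 1) * (δ / p) = δ - δ/p := by field_simp
      rw [this]; linarith
    linarith
  by_cases hcase : δ * p / E < 1 / 12
  · -- Case B : structural argument
    have hpE : (0:ℝ) < (p:ℝ)/E := by positivity
    rcases S.eq_empty_or_nonempty with hSe | hSne
    · rw [hSe]; simp; positivity
    set x1 : ℕ := S.min' hSne with hx1def
    have hx1S : x1 ∈ S := S.min'_mem hSne
    obtain ⟨⟨hpx1, hx12p⟩, hx1ε⟩ := hmem x1 hx1S
    have hx1pos : (0:ℤ) < (x1:ℤ) := by exact_mod_cast (by omega : 0 < x1)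
    set a1 : ℤ := round ((x1:ℝ)*ξ) with ha1def
    set g : ℕ := Int.gcd (x1:ℤ) a1 with hgdef
    have hg0 : 0 < g := Int.gcd_pos_of_ne_zero_left a1 (by exact_mod_cast hx1pos.ne')
    have hgR : (0:ℤ) < (g:ℤ) := by exact_mod_cast hg0
    set Z : ℤ := (x1:ℤ) / (g:ℤ) with hZdef
    set A0 : ℤ := a1 / (g:ℤ) with hA0def
    have hgZ : (g:ℤ) * Z = (x1:ℤ) := Int.mul_ediv_cancel' (Int.gcd_dvd_left _ _)
    have hgA : (g:ℤ) * A0 = a1 := Int.mul_ediv_cancel' (Int.gcd_dvd_right _ _)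
    have hZpos : 0 < Z := by nlinarith
    have hcop : Int.gcd Z A0 = 1 := Int.gcd_div_gcd_div_gcd hg0
    -- the small-ness bound used
    have hsmall : ∀ y ∈ S, |(y:ℝ)*ξ - round ((y:ℝ)*ξ)| ≤ δ/E ∧ (y:ℝ) ≤ 2*p := by
      intro y hy
      obtain ⟨⟨hpy, hy2p⟩, hyε⟩ := hmem y hy
      exact ⟨hyε, by exact_mod_cast hy2p⟩
    -- cross-product relation
    have hcross : ∀ y ∈ S, (x1:ℤ) * round ((y:ℝ)*ξ) = (y:ℤ) * a1 := by
      intro y hy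
      set ay : ℤ := round ((y:ℝ)*ξ) with haydef
      set n : ℤ := (x1:ℤ) * ay - (y:ℤ) * a1 with hndef
      obtain ⟨hyε, hy2p⟩ := hsmall y hy
      obtain ⟨hx1ε', hx12p'⟩ := hsmall x1 hx1S
      have hcast : (n:ℝ) = (y:ℝ) * ((x1:ℝ)*ξ - a1) - (x1:ℝ) * ((y:ℝ)*ξ - ay) := by
        rw [hndef]; push_cast; ring
      have hx1nn : (0:ℝ) ≤ (x1:ℝ) := by positivity
      have hynn : (0:ℝ) ≤ (y:ℝ) := by positivity
      have habs : |(n:ℝ)| < 1 := by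
        rw [hcast]
        calc |(y:ℝ) * ((x1:ℝ)*ξ - a1) - (x1:ℝ) * ((y:ℝ)*ξ - ay)|
            ≤ |(y:ℝ) * ((x1:ℝ)*ξ - a1)| + |(x1:ℝ) * ((y:ℝ)*ξ - ay)| := abs_sub _ _
          _ = (y:ℝ) * |(x1:ℝ)*ξ - a1| + (x1:ℝ) * |(y:ℝ)*ξ - ay| := by
              rw [abs_mul, abs_mul, abs_of_nonneg hynn, abs_of_nonneg hx1nn]
          _ ≤ 2*(p:ℝ) * (δ/E) + 2*(p:ℝ) * (δ/E) := by
              have h1 : |(x1:ℝ)*ξ - a1| ≤ δ/E := hx1ε'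
              have h2 : |(y:ℝ)*ξ - ay| ≤ δ/E := hyε
              have hδE : (0:ℝ) ≤ δ/E := by positivity
              nlinarith [abs_nonneg ((x1:ℝ)*ξ - a1), abs_nonneg ((y:ℝ)*ξ - ay)]
          _ < 1 := by
              have he : 2*(p:ℝ) * (δ/E) + 2*(p:ℝ) * (δ/E) = 4 * (δ * p / E) := by ring
              rw [he]; linarith
      have hn0 : n = 0 := by
        have h1 : ((|n| : ℤ) : ℝ) < 1 := by rw [Int.cast_abs]; exact habs
        have h2 : |n| < 1 := by exact_mod_cast h1
        rcases abs_lt.mp h2 with ⟨ha, hb⟩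
        omega
      rw [hndef] at hn0
      linarith
    set c : ℕ → ℤ := fun y => (y:ℤ) / Z with hcdef
    have hstruct : ∀ y ∈ S, (y:ℤ) = Z * c y ∧ round ((y:ℝ)*ξ) = c y * A0 := by
      intro y hy
      have h := hcross y hy
      have h2 : Z * round ((y:ℝ)*ξ) = (y:ℤ) * A0 := by
        apply mul_left_cancel₀ hgR.ne'
        linear_combination round ((y:ℝ)*ξ) * hgZ + h - (y:ℤ) * hgA
      have hdvd : Z ∣ (y:ℤ) :=
        (Int.isCoprime_iff_gcd_eq_one.mpr hcop).dvd_of_dvd_mul_right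
          ⟨round ((y:ℝ)*ξ), by linear_combination -h2⟩
      have hyc : (y:ℤ) = Z * c y := (Int.mul_ediv_cancel' hdvd).symm
      refine ⟨hyc, ?_⟩
      apply mul_left_cancel₀ hZpos.ne'
      rw [h2, hyc]; ring
    have hcpos : ∀ y ∈ S, 0 < c y := by
      intro y hy
      have hyc := (hstruct y hy).1
      have hypos : (0:ℤ) < (y:ℤ) := by
        have := (hmem y hy).1.1
        exact_mod_cast (by omega : 0 < y)
      nlinarith
    set w : ℝ := (Z:ℝ)*ξ - (A0:ℝ) with hwdef
    have hu : ∀ y ∈ S, (y:ℝ)*ξ - (round ((y:ℝ)*ξ):ℝ) = (c y:ℝ) * w := by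
      intro y hy
      obtain ⟨h1, h2⟩ := hstruct y hy
      have h1R : (y:ℝ) = (Z:ℝ) * (c y:ℝ) := by exact_mod_cast congrArg (fun z : ℤ => (z:ℝ)) h1
      have h2R : ((round ((y:ℝ)*ξ)):ℝ) = (c y:ℝ) * (A0:ℝ) := by exact_mod_cast congrArg (fun z : ℤ => (z:ℝ)) h2
      rw [h2R]
      conv_lhs => rw [h1R]
      rw [hwdef]; ring
    -- badness at Z
    have hbadZ : δ ≤ (Z:ℝ) * |w| := by
      set z0 : ℕ := Z.toNat with hz0def
      have hz0Z : (z0:ℤ) = Z := Int.toNat_of_nonneg hZpos.le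
      have hz0pos : 0 < z0 := by omega
      have hz0R : ((z0:ℕ):ℝ) = (Z:ℝ) := by exact_mod_cast congrArg (fun z : ℤ => (z:ℝ)) hz0Z
      have h1 := hbad z0 hz0pos
      have h2 : nint ((z0:ℝ)*ξ) ≤ |w| := by
        have := nint_le_abs ((z0:ℝ)*ξ) A0
        rwa [hz0R] at this
      calc δ ≤ (z0:ℝ) * nint ((z0:ℝ)*ξ) := h1
        _ ≤ (z0:ℝ) * |w| := by
            have : (0:ℝ) ≤ (z0:ℝ) := by positivity
            nlinarith
        _ = (Z:ℝ) * |w| := by rw [hz0R]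
    -- max element
    set m : ℕ := S.max' hSne with hmdef
    have hmS : m ∈ S := S.max'_mem hSne
    have hZR : (0:ℝ) < (Z:ℝ) := by exact_mod_cast hZpos
    have hcmR : (0:ℝ) < (c m : ℝ) := by exact_mod_cast hcpos m hmS
    -- c m * |w| ≤ δ/E
    have hcmw : (c m : ℝ) * |w| ≤ δ/E := by
      have h1 : nint ((m:ℝ)*ξ) ≤ δ/E := (hmem m hmS).2
      have h2 : nint ((m:ℝ)*ξ) = |(c m : ℝ) * w| := by
        show |(m:ℝ)*ξ - round ((m:ℝ)*ξ)| = _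
        rw [hu m hmS]
      rw [h2, abs_mul, abs_of_pos hcmR] at h1
      exact h1
    -- Z ≤ 2p
    have hZ2p : (Z:ℝ) ≤ 2*(p:ℝ) := by
      have h1 : Z ≤ (x1:ℤ) := by nlinarith
      have h2 : ((x1:ℕ):ℝ) ≤ 2*(p:ℝ) := by exact_mod_cast hx12p
      have h3 : (Z:ℝ) ≤ ((x1:ℤ):ℝ) := by exact_mod_cast h1
      push_cast at h3 ⊢
      linarith
    -- conclude c m ≤ 2 p / E
    have hcm2 : (c m : ℝ) ≤ 2*((p:ℝ)/E) := by
      have e1 : (Z:ℝ) * |w| * (c m : ℝ) = (Z:ℝ) * ((c m : ℝ) * |w|) := by ring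
      have f1 := mul_le_mul_of_nonneg_left hcmw hZR.le
      have f2 := mul_le_mul_of_nonneg_right hbadZ hcmR.le
      have h1 : δ * (c m : ℝ) ≤ (Z:ℝ) * (δ/E) := by linarith
      have hq : (0:ℝ) ≤ δ/E := by positivity
      have h2 : (Z:ℝ) * (δ/E) ≤ 2*(p:ℝ) * (δ/E) := mul_le_mul_of_nonneg_right hZ2p hq
      have he : 2*(p:ℝ)*(δ/E) = δ * (2*((p:ℝ)/E)) := by ring
      have h3 : δ * (c m : ℝ) ≤ δ * (2*((p:ℝ)/E)) := by linarith
      exact le_of_mul_le_mul_left h3 hδ0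
    -- card bound
    have hinj : Set.InjOn c S := by
      intro a ha b hb hab
      have h1 := (hstruct a ha).1
      have h2 := (hstruct b hb).1
      have : (a:ℤ) = (b:ℤ) := by rw [h1, h2, hab]
      exact_mod_cast this
    have himg : S.image c ⊆ Finset.Icc 1 (c m) := by
      intro z hz
      rw [Finset.mem_image] at hz
      obtain ⟨y, hy, rfl⟩ := hz
      rw [Finset.mem_Icc]
      refine ⟨hcpos y hy, ?_⟩
      have hym : y ≤ m := S.le_max' y hy
      have h1 := (hstruct y hy).1
      have h2 := (hstruct m hmS).1
      have hyZ : Z * c y ≤ Z * c m := by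
        rw [← h1, ← h2]; exact_mod_cast hym
      exact le_of_mul_le_mul_left hyZ hZpos
    have hcard : S.card ≤ (Finset.Icc (1:ℤ) (c m)).card := by
      rw [← Finset.card_image_of_injOn hinj]
      exact Finset.card_le_card himg
    have h4 := Int.card_Icc_of_le 1 (c m) (by linarith [hcpos m hmS])
    have hfin : (S.card : ℝ) ≤ (c m : ℝ) := by
      have h5 : (S.card : ℤ) ≤ ((Finset.Icc (1:ℤ) (c m)).card : ℤ) := by exact_mod_cast hcard
      have h6 : (S.card : ℤ) ≤ c m := by omega
      exact_mod_cast h6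
    have he2 : (24*δ+2)*((p:ℝ)/E) = 24*δ*((p:ℝ)/E) + 2*((p:ℝ)/E) := by ring
    have h7 : (0:ℝ) ≤ 24*δ*((p:ℝ)/E) := by positivity
    linarith
  · -- Case A : bucket counting
    have hcase : 1 / 12 ≤ δ * p / E := not_lt.mp hcase
    set f : ℕ → ℤ := fun x => ⌊((x : ℝ) * ξ - round ((x : ℝ) * ξ)) * (p / δ)⌋ with hf
    have hpδ : (0:ℝ) < (p:ℝ) / δ := by positivity
    -- if f x = f y with x < y, contradiction
    have hmain : ∀ x ∈ S, ∀ y ∈ S, x < y → f x ≠ f y := by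
      intro x hx y hy hxy heq
      set a : ℝ := ((x : ℝ) * ξ - round ((x : ℝ) * ξ)) * (p / δ) with ha
      set b : ℝ := ((y : ℝ) * ξ - round ((y : ℝ) * ξ)) * (p / δ) with hb
      have h1 : a < ⌊a⌋ + 1 := Int.lt_floor_add_one a
      have h2 : b < ⌊b⌋ + 1 := Int.lt_floor_add_one b
      have h3 : (⌊a⌋ : ℝ) ≤ a := Int.floor_le a
      have h4 : (⌊b⌋ : ℝ) ≤ b := Int.floor_le b
      have heqR : ((⌊a⌋ : ℝ)) = ((⌊b⌋ : ℝ)) := by exact_mod_cast congrArg (fun z : ℤ => (z : ℝ)) heq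
      have habs : |b - a| < 1 := by
        rw [abs_lt]; constructor <;> linarith
      have hs := hsep x hx y hy hxy
      have : |b - a| = |((y : ℝ) * ξ - round ((y : ℝ) * ξ)) - ((x : ℝ) * ξ - round ((x : ℝ) * ξ))| * ((p:ℝ)/δ) := by
        rw [ha, hb, ← sub_mul, abs_mul, abs_of_pos hpδ]
      rw [this] at habs
      have : δ / (p:ℝ) * ((p:ℝ)/δ) < 1 := lt_of_le_of_lt (by nlinarith [abs_nonneg (((y : ℝ) * ξ - round ((y : ℝ) * ξ)) - ((x : ℝ) * ξ - round ((x : ℝ) * ξ)))]) habs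
      have h5 : δ / (p:ℝ) * ((p:ℝ)/δ) = 1 := by field_simp
      linarith [h5 ▸ this]
    have hinj : Set.InjOn f S := by
      intro x hx y hy hxy
      by_contra hne
      rcases Ne.lt_or_gt hne with h | h
      · exact hmain x hx y hy h hxy
      · exact hmain y hy x hx h hxy.symm
    have himg : S.image f ⊆ Finset.Icc ⌊-((p:ℝ)/E)⌋ ⌊(p:ℝ)/E⌋ := by
      intro z hz
      rw [Finset.mem_image] at hz
      obtain ⟨x, hx, rfl⟩ := hz
      obtain ⟨⟨hpx, hx2p⟩, hxε⟩ := hmem x hx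
      have habs : |((x : ℝ) * ξ - round ((x : ℝ) * ξ))| ≤ δ / E := hxε
      rw [abs_le] at habs
      have hval : -((p:ℝ)/E) ≤ ((x : ℝ) * ξ - round ((x : ℝ) * ξ)) * (p / δ) ∧
          ((x : ℝ) * ξ - round ((x : ℝ) * ξ)) * (p / δ) ≤ (p:ℝ)/E := by
        constructor
        · have : -(δ/E) * ((p:ℝ)/δ) ≤ ((x : ℝ) * ξ - round ((x : ℝ) * ξ)) * (p / δ) := by nlinarith [habs.1]
          have he : -(δ/E) * ((p:ℝ)/δ) = -((p:ℝ)/E) := by field_simp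
          linarith [he ▸ this]
        · have : ((x : ℝ) * ξ - round ((x : ℝ) * ξ)) * (p / δ) ≤ (δ/E) * ((p:ℝ)/δ) := by nlinarith [habs.2]
          have he : (δ/E) * ((p:ℝ)/δ) = (p:ℝ)/E := by field_simp
          linarith [he ▸ this]
      rw [Finset.mem_Icc]
      exact ⟨Int.floor_le_floor hval.1, Int.floor_le_floor hval.2⟩
    have hcard : S.card ≤ (Finset.Icc ⌊-((p:ℝ)/E)⌋ ⌊(p:ℝ)/E⌋).card := by
      rw [← Finset.card_image_of_injOn hinj]
      exact Finset.card_le_card himg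
    have hpE : (0:ℝ) < (p:ℝ)/E := by positivity
    have hab : ⌊-((p:ℝ)/E)⌋ ≤ ⌊(p:ℝ)/E⌋ := Int.floor_le_floor (by linarith)
    have hcard2 : ((Finset.Icc ⌊-((p:ℝ)/E)⌋ ⌊(p:ℝ)/E⌋).card : ℝ)
        = (⌊(p:ℝ)/E⌋ : ℝ) + 1 - (⌊-((p:ℝ)/E)⌋ : ℝ) := by
      have := Int.card_Icc_of_le ⌊-((p:ℝ)/E)⌋ ⌊(p:ℝ)/E⌋ (by omega)
      exact_mod_cast this
    have hub : ((Finset.Icc ⌊-((p:ℝ)/E)⌋ ⌊(p:ℝ)/E⌋).card : ℝ) ≤ 2 * ((p:ℝ)/E) + 2 := by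
      rw [hcard2]
      have h1 : (⌊(p:ℝ)/E⌋ : ℝ) ≤ (p:ℝ)/E := Int.floor_le _
      have h2 : -((p:ℝ)/E) - 1 < (⌊-((p:ℝ)/E)⌋ : ℝ) := Int.sub_one_lt_floor _
      linarith
    have hk : (S.card : ℝ) ≤ 2 * ((p:ℝ)/E) + 2 := le_trans (by exact_mod_cast hcard) hub
    have h2 : 2 ≤ 24 * δ * ((p:ℝ)/E) := by
      have : 24 * (δ * p / E) = 24 * δ * ((p:ℝ)/E) := by ring
      linarith [this ▸ (by linarith : (2:ℝ) ≤ 24 * (δ * p / E))]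
    nlinarith [hpE]
end

section
/- Let ξ be δ-badly approximable with 0 < δ < 1/24, let β ∈ [0,1], α = 1 − β, p ≥ 2 an integer, and q = ⌊(p²/δ)·log(p²/δ)⌋ + 1. Then the sum over all integers x with p < x ≤ q and ‖xξ‖ ≤ δ/(x·log(x+1))^β of the quantity 1/(x·log(x+1))^α is at most 2⁶·(1 + log(1/δ)). -/
open Real

lemma nint_le (t : ℝ) (n : ℤ) : nint t ≤ |t - (n : ℝ)| := by
  unfold nint
  rcases eq_or_ne n (round t) with h | h
  · rw [h]
  · have h0 : round t - n ≠ 0 := sub_ne_zero.mpr (Ne.symm h)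
    have h1 : (1:ℤ) ≤ |round t - n| := Int.one_le_abs h0
    have h1' : (1:ℝ) ≤ |(round t : ℝ) - (n:ℝ)| := by
      have h1r : ((1:ℤ):ℝ) ≤ ((|round t - n| : ℤ) : ℝ) := Int.cast_le.mpr h1
      push_cast at h1r
      linarith
    have h2 := abs_sub_round t
    have h3 : |(round t:ℝ) - (n:ℝ)| ≤ |(round t:ℝ) - t| + |t - (n:ℝ)| := abs_sub_le _ _ _
    have h4 : |(round t:ℝ) - t| = |t - (round t:ℝ)| := abs_sub_comm _ _
    linarith

lemma nint_sub (a b : ℝ) : nint (a - b) ≤ nint a + nint b := by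
  have h := nint_le (a - b) (round a - round b)
  have e : |(a - b) - ((round a - round b : ℤ):ℝ)| = |(a - round a) - (b - round b)| := by
    push_cast
    ring_nf
  rw [e] at h
  have h2 : |(a - round a) - (b - round b)| ≤ |a - round a| + |b - round b| := abs_sub _ _
  unfold nint
  calc |a - b - round (a-b)| = nint (a - b) := rfl
    _ ≤ |(a - round a) - (b - round b)| := h
    _ ≤ _ := h2

lemma log_diff {a b : ℝ} (ha : 0 < a) (hab : a ≤ b) : (b - a)/b ≤ Real.log b - Real.log a := by
  have hb : 0 < b := lt_of_lt_of_le ha hab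
  have h := Real.log_le_sub_one_of_pos (show (0:ℝ) < a/b by positivity)
  rw [Real.log_div (ne_of_gt ha) (ne_of_gt hb)] at h
  have h2 : a/b - 1 = -((b - a)/b) := by field_simp; ring
  linarith

lemma telescope (y : ℕ) (hy : 3 ≤ y) :
    1 / ((y:ℝ) * Real.log ((y:ℝ)+1)) ≤
      2 * (Real.log (Real.log ((y:ℝ)+1)) - Real.log (Real.log (y:ℝ))) := by
  have hy3 : (3:ℝ) ≤ (y:ℝ) := by exact_mod_cast hy
  have h1 : 0 < Real.log (y:ℝ) := Real.log_pos (by linarith)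
  have h2 : Real.log (y:ℝ) ≤ Real.log ((y:ℝ)+1) := Real.log_le_log (by linarith) (by linarith)
  have h2' : 0 < Real.log ((y:ℝ)+1) := lt_of_lt_of_le h1 h2
  have A : 1/((y:ℝ)+1) ≤ Real.log ((y:ℝ)+1) - Real.log (y:ℝ) := by
    have := log_diff (show (0:ℝ) < (y:ℝ) by linarith) (show (y:ℝ) ≤ (y:ℝ)+1 by linarith)
    simpa using this
  have B : (Real.log ((y:ℝ)+1) - Real.log (y:ℝ))/Real.log ((y:ℝ)+1)
      ≤ Real.log (Real.log ((y:ℝ)+1)) - Real.log (Real.log (y:ℝ)) := log_diff h1 h2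
  have C : (1/((y:ℝ)+1))/Real.log ((y:ℝ)+1)
      ≤ (Real.log ((y:ℝ)+1) - Real.log (y:ℝ))/Real.log ((y:ℝ)+1) :=
    by gcongr
  have D : (1/((y:ℝ)+1))/Real.log ((y:ℝ)+1) = 1/(((y:ℝ)+1) * Real.log ((y:ℝ)+1)) := by
    rw [div_div, one_div]
  have E : 1 / ((y:ℝ) * Real.log ((y:ℝ)+1)) ≤ 2 * (1/(((y:ℝ)+1) * Real.log ((y:ℝ)+1))) := by
    rw [div_le_iff₀ (by positivity)]
    have : 2 * (1 / (((y:ℝ) + 1) * Real.log ((y:ℝ) + 1))) = 2 / (((y:ℝ)+1) * Real.log ((y:ℝ)+1)) := by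
      ring
    rw [this, div_mul_eq_mul_div, le_div_iff₀ (by positivity)]
    nlinarith [h2'.le, sq_nonneg (Real.log ((y:ℝ)+1))]
  rw [D] at C
  linarith

noncomputable def Fl (x : ℕ) : ℝ := (x:ℝ) * Real.log ((x:ℝ)+1)

noncomputable def Mg (β : ℝ) (x : ℕ) : ℕ := max 1 (min x ⌊(Fl x)^β / 2⌋₊)

lemma Fl_log_gt {x : ℕ} (hx : 3 ≤ x) : 1 < Real.log ((x:ℝ)+1) := by
  have hx3 : (3:ℝ) ≤ (x:ℝ) := by exact_mod_cast hx
  have he : Real.exp 1 < (x:ℝ) + 1 := by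
    have := Real.exp_one_lt_d9
    linarith
  exact (Real.lt_log_iff_exp_lt (by linarith [Real.exp_pos 1])).mpr he

lemma Fl_pos {x : ℕ} (hx : 3 ≤ x) : 0 < Fl x := by
  have hx3 : (3:ℝ) ≤ (x:ℝ) := by exact_mod_cast hx
  have := Fl_log_gt hx
  unfold Fl
  nlinarith

lemma Fl_mono {x y : ℕ} (hx : 3 ≤ x) (hxy : x ≤ y) : Fl x ≤ Fl y := by
  have hc : (x:ℝ) ≤ (y:ℝ) := by exact_mod_cast hxy
  have hx3 : (3:ℝ) ≤ (x:ℝ) := by exact_mod_cast hx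
  have h1 : Real.log ((x:ℝ)+1) ≤ Real.log ((y:ℝ)+1) := Real.log_le_log (by linarith) (by linarith)
  have h2 : 0 < Real.log ((x:ℝ)+1) := by linarith [Fl_log_gt hx]
  unfold Fl
  nlinarith

lemma Mg_pos (β : ℝ) (x : ℕ) : 1 ≤ Mg β x := le_max_left _ _

lemma Mg_le_self {β : ℝ} {x : ℕ} (hx : 1 ≤ x) : Mg β x ≤ x := by
  unfold Mg
  omega

lemma Mg_le_gap {β : ℝ} {x y : ℕ} (hβ0 : 0 ≤ β) (hx : 3 ≤ x) (hxy : x < y)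
    (hgap : (Fl x)^β ≤ 2*((y:ℝ) - (x:ℝ))) : x + Mg β x ≤ y := by
  have hMle : Mg β x ≤ y - x := by
    by_cases h0 : min x ⌊(Fl x)^β/2⌋₊ = 0
    · have : Mg β x = 1 := by unfold Mg; omega
      omega
    · have hMg : Mg β x = min x ⌊(Fl x)^β/2⌋₊ := by unfold Mg; omega
      have h1 : ((min x ⌊(Fl x)^β/2⌋₊ : ℕ) : ℝ) ≤ (Fl x)^β/2 := by
        calc ((min x ⌊(Fl x)^β/2⌋₊ : ℕ) : ℝ) ≤ ((⌊(Fl x)^β/2⌋₊ : ℕ) : ℝ) := by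
              exact_mod_cast Nat.cast_le.mpr (min_le_right _ _)
          _ ≤ (Fl x)^β/2 := Nat.floor_le (by
                have := Real.rpow_nonneg (Fl_pos hx).le β
                linarith)
      have h2 : ((Mg β x : ℕ) : ℝ) ≤ (y:ℝ) - (x:ℝ) := by
        rw [hMg]; linarith
      have h3 : ((Mg β x : ℕ) : ℝ) ≤ ((y - x : ℕ) : ℝ) := by
        rw [Nat.cast_sub hxy.le]; exact h2
      exact_mod_cast h3
  omega

lemma Mg_key {β : ℝ} {x : ℕ} (hβ0 : 0 ≤ β) (hx : 3 ≤ x) (hmem : (Fl x)^β ≤ (x:ℝ)) :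
    (Fl x)^β ≤ 4 * (Mg β x : ℝ) := by
  have htnn : (0:ℝ) ≤ (Fl x)^β/2 := by
    have := Real.rpow_nonneg (Fl_pos hx).le β
    linarith
  rcases le_or_gt x ⌊(Fl x)^β/2⌋₊ with h | h
  · have hMg : Mg β x = x := by unfold Mg; omega
    rw [hMg]
    have hx1 : (1:ℝ) ≤ (x:ℝ) := by exact_mod_cast (by omega : 1 ≤ x)
    nlinarith
  · rcases Nat.eq_zero_or_pos ⌊(Fl x)^β/2⌋₊ with h0 | h0
    · have hMg : Mg β x = 1 := by unfold Mg; omega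
      have ht1 : (Fl x)^β/2 < 1 := by
        have := Nat.lt_floor_add_one ((Fl x)^β/2)
        rw [h0] at this; push_cast at this; linarith
      rw [hMg]; push_cast; linarith
    · have hMg : Mg β x = ⌊(Fl x)^β/2⌋₊ := by unfold Mg; omega
      have h1 : (Fl x)^β/2 < (⌊(Fl x)^β/2⌋₊ : ℝ) + 1 := Nat.lt_floor_add_one _
      have h2 : (1:ℝ) ≤ (⌊(Fl x)^β/2⌋₊ : ℝ) := by exact_mod_cast h0
      rw [hMg]
      linarith

lemma per_element {α β : ℝ} (hβ0 : 0 ≤ β) (hα : α = 1 - β) {x : ℕ} (hx : 3 ≤ x)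
    (hmem : (Fl x)^β ≤ (x:ℝ)) :
    1/(Fl x)^α ≤ 16 * ∑ y ∈ Finset.Ico x (x + Mg β x), 1/Fl y := by
  have hFx : 0 < Fl x := Fl_pos hx
  have hM1 : 1 ≤ Mg β x := Mg_pos β x
  have hMx : Mg β x ≤ x := Mg_le_self (by omega)
  have key : (Fl x)^β ≤ 4 * (Mg β x : ℝ) := Mg_key hβ0 hx hmem
  have hlogx : 0 < Real.log ((x:ℝ)+1) := by linarith [Fl_log_gt hx]
  have hxR : (3:ℝ) ≤ (x:ℝ) := by exact_mod_cast hx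
  -- lower bound each term
  have hterm : ∀ y ∈ Finset.Ico x (x + Mg β x), 1/(4 * Fl x) ≤ 1/Fl y := by
    intro y hy
    rw [Finset.mem_Ico] at hy
    have hy3 : 3 ≤ y := le_trans hx hy.1
    have hyR : (x:ℝ) ≤ (y:ℝ) := by exact_mod_cast hy.1
    have hy2x : (y:ℝ) ≤ 2*(x:ℝ) := by
      have : y < 2*x := by omega
      exact_mod_cast this.le
    have hFy : Fl y ≤ 4 * Fl x := by
      have hlog : Real.log ((y:ℝ)+1) ≤ 2 * Real.log ((x:ℝ)+1) := by
        have hsq : (y:ℝ)+1 ≤ ((x:ℝ)+1)^2 := by nlinarith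
        calc Real.log ((y:ℝ)+1) ≤ Real.log (((x:ℝ)+1)^2) :=
              Real.log_le_log (by positivity) hsq
          _ = 2 * Real.log ((x:ℝ)+1) := by
              rw [Real.log_pow]; norm_num
      have hly : 0 ≤ Real.log ((y:ℝ)+1) := by linarith [Fl_log_gt hy3]
      unfold Fl
      nlinarith
    exact one_div_le_one_div_of_le (Fl_pos hy3) hFy
  have hcard : (Finset.Ico x (x + Mg β x)).card = Mg β x := by
    rw [Nat.card_Ico]; omega
  have sumlb : (Mg β x : ℝ) * (1/(4 * Fl x)) ≤ ∑ y ∈ Finset.Ico x (x + Mg β x), 1/Fl y := by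
    have := Finset.card_nsmul_le_sum (Finset.Ico x (x + Mg β x)) (fun y => 1/Fl y)
      (1/(4 * Fl x)) hterm
    rw [hcard, nsmul_eq_mul] at this
    exact this
  -- main inequality
  have hFas : (Fl x)^α * (Fl x)^β = Fl x := by
    rw [← Real.rpow_add hFx]
    have : α + β = 1 := by rw [hα]; ring
    rw [this, Real.rpow_one]
  have hpα : 0 < (Fl x)^α := Real.rpow_pos_of_pos hFx α
  have main : 1/(Fl x)^α ≤ 4 * (Mg β x : ℝ) / Fl x := by
    rw [div_le_div_iff₀ hpα hFx]
    have h1 : Fl x ≤ (Fl x)^α * (4 * (Mg β x : ℝ)) := by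
      calc Fl x = (Fl x)^α * (Fl x)^β := hFas.symm
        _ ≤ (Fl x)^α * (4 * (Mg β x : ℝ)) :=
          mul_le_mul_of_nonneg_left key hpα.le
    nlinarith
  calc 1/(Fl x)^α ≤ 4 * (Mg β x : ℝ) / Fl x := main
    _ = 16 * ((Mg β x : ℝ) * (1/(4 * Fl x))) := by field_simp; ring
    _ ≤ 16 * ∑ y ∈ Finset.Ico x (x + Mg β x), 1/Fl y := by
        have : (0:ℝ) ≤ 16 := by norm_num
        nlinarith [sumlb]

set_option maxHeartbeats 1000000

theorem stmt4 (ξ δ α β : ℝ) (hδ0 : 0 < δ) (hδ1 : δ < 1/24)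
    (hbad : ∀ p : ℕ, 0 < p → δ ≤ (p : ℝ) * nint ((p : ℝ) * ξ))
    (hβ0 : 0 ≤ β) (hβ1 : β ≤ 1) (hα : α = 1 - β)
    (p q : ℕ) (hp : 2 ≤ p)
    (hq : q = ⌊((p : ℝ)^2 / δ) * Real.log ((p : ℝ)^2 / δ)⌋₊ + 1) :
    ∑ x ∈ (Finset.Ioc p q).filter
        (fun x : ℕ => nint ((x : ℝ) * ξ) ≤ δ / (((x : ℝ) * Real.log (x + 1)) ^ β)),
      1 / (((x : ℝ) * Real.log (x + 1)) ^ α) ≤ 2 ^ 6 * (1 + Real.log (1 / δ)) := by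
  classical
  have hp2 : (2:ℝ) ≤ (p:ℝ) := by exact_mod_cast hp
  obtain ⟨R, hR⟩ : ∃ r : ℝ, r = (p:ℝ)^2/δ := ⟨_, rfl⟩
  obtain ⟨L, hL⟩ : ∃ l : ℝ, l = Real.log (1/δ) := ⟨_, rfl⟩
  rw [show ((p:ℝ)^2/δ) = R from hR.symm] at hq
  rw [show Real.log (1/δ) = L from hL.symm]
  have hexp9 : Real.exp 1 < 2.7182818286 := Real.exp_one_lt_d9
  have hexp9' : (2.7182818283:ℝ) < Real.exp 1 := Real.exp_one_gt_d9
  have hR24 : 24*(p:ℝ)^2 ≤ R := by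
    rw [hR, le_div_iff₀ hδ0]
    nlinarith
  have hR96 : (96:ℝ) ≤ R := by nlinarith
  have hRpos : (0:ℝ) < R := by linarith
  have hlogR : 1 ≤ Real.log R := by
    rw [Real.le_log_iff_exp_le hRpos]
    linarith
  have hL3 : 3 < L := by
    have h24 : (24:ℝ) < 1/δ := by
      rw [lt_div_iff₀ hδ0]; nlinarith
    have he3 : Real.exp 3 < 24 := by
      have : Real.exp 3 = Real.exp 1 * Real.exp 1 * Real.exp 1 := by
        rw [← Real.exp_add, ← Real.exp_add]; norm_num
      nlinarith [Real.exp_pos 1]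
    have h1 : (3:ℝ) < Real.log 24 := (Real.lt_log_iff_exp_lt (by norm_num)).mpr he3
    have h2 : Real.log 24 ≤ L := by
      rw [hL]; exact Real.log_le_log (by norm_num) h24.le
    linarith
  have hLpos : (0:ℝ) < L := by linarith
  -- q ≥ p + 1
  have hq_ge : p + 1 ≤ q := by
    rw [hq]
    have hple : (p:ℝ) ≤ R * Real.log R := by nlinarith
    have : p ≤ ⌊R * Real.log R⌋₊ := Nat.le_floor hple
    omega
  set S := (Finset.Ioc p q).filter
      (fun x : ℕ => nint ((x : ℝ) * ξ) ≤ δ / (((x : ℝ) * Real.log (x + 1)) ^ β)) with hS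
  have memS : ∀ x ∈ S, p < x ∧ x ≤ q ∧ nint ((x:ℝ)*ξ) ≤ δ / (Fl x)^β := by
    intro x hx
    rw [hS, Finset.mem_filter, Finset.mem_Ioc] at hx
    exact ⟨hx.1.1, hx.1.2, hx.2⟩
  have hx3S : ∀ x ∈ S, 3 ≤ x := by intro x hx; have := (memS x hx).1; omega
  -- membership constraint
  have memB : ∀ x ∈ S, (Fl x)^β ≤ (x:ℝ) := by
    intro x hx
    obtain ⟨hpx, _, hnx⟩ := memS x hx
    have hx3 := hx3S x hx
    have hFx : 0 < Fl x := Fl_pos hx3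
    have hc : 0 < (Fl x)^β := Real.rpow_pos_of_pos hFx β
    have hb := hbad x (by omega)
    have h2 : δ ≤ (x:ℝ) * (δ/(Fl x)^β) := by
      refine le_trans hb (mul_le_mul_of_nonneg_left hnx (by positivity))
    rw [mul_div_assoc'] at h2
    rw [le_div_iff₀ hc] at h2
    have h3 : (Fl x)^β * δ ≤ (x:ℝ) * δ := by linarith
    exact le_of_mul_le_mul_right h3 hδ0
  -- gap property
  have gap : ∀ x ∈ S, ∀ y ∈ S, x < y → (Fl x)^β ≤ 2*((y:ℝ) - (x:ℝ)) := by
    intro x hx y hy hxy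
    obtain ⟨hpx, hxq, hnx⟩ := memS x hx
    obtain ⟨hpy, hyq, hny⟩ := memS y hy
    have hx3 := hx3S x hx
    have hy3 := hx3S y hy
    have hFx : 0 < Fl x := Fl_pos hx3
    have hc : 0 < (Fl x)^β := Real.rpow_pos_of_pos hFx β
    have hcy : 0 < (Fl y)^β := Real.rpow_pos_of_pos (Fl_pos hy3) β
    have hFmono : (Fl x)^β ≤ (Fl y)^β :=
      Real.rpow_le_rpow hFx.le (Fl_mono hx3 hxy.le) hβ0
    have hny' : nint ((y:ℝ)*ξ) ≤ δ/(Fl x)^β :=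
      le_trans hny (div_le_div_of_nonneg_left hδ0.le hc hFmono)
    have hcast : ((y - x:ℕ):ℝ) = (y:ℝ) - (x:ℝ) := by
      rw [Nat.cast_sub hxy.le]
    have hsub : nint (((y - x : ℕ):ℝ) * ξ) ≤ 2*δ/(Fl x)^β := by
      rw [hcast, sub_mul]
      calc nint ((y:ℝ)*ξ - (x:ℝ)*ξ) ≤ nint ((y:ℝ)*ξ) + nint ((x:ℝ)*ξ) := nint_sub _ _
        _ ≤ δ/(Fl x)^β + δ/(Fl x)^β := add_le_add hny' hnx
        _ = 2*δ/(Fl x)^β := by ring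
    have hposn : 0 < y - x := by omega
    have hb := hbad (y - x) hposn
    have h2 : δ ≤ ((y - x:ℕ):ℝ) * (2*δ/(Fl x)^β) := by
      refine le_trans hb (mul_le_mul_of_nonneg_left hsub (by positivity))
    rw [hcast, mul_div_assoc', le_div_iff₀ hc] at h2
    have h3 : (Fl x)^β * δ ≤ (2*((y:ℝ) - (x:ℝ))) * δ := by linarith
    exact le_of_mul_le_mul_right h3 hδ0
  -- disjointness of the intervals
  have hdisjkey : ∀ u ∈ S, ∀ v ∈ S, u < v →
      Disjoint (Finset.Ico u (u + Mg β u)) (Finset.Ico v (v + Mg β v)) := by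
    intro u hu v hv huv
    have h := Mg_le_gap hβ0 (hx3S u hu) huv (gap u hu v hv huv)
    rw [Finset.disjoint_left]
    intro z hz1 hz2
    rw [Finset.mem_Ico] at hz1 hz2
    omega
  have hdisj : (S : Set ℕ).PairwiseDisjoint (fun x => Finset.Ico x (x + Mg β x)) := by
    intro a ha b hb hab
    rcases lt_or_gt_of_ne hab with h | h
    · exact hdisjkey a (Finset.mem_coe.mp ha) b (Finset.mem_coe.mp hb) h
    · exact (hdisjkey b (Finset.mem_coe.mp hb) a (Finset.mem_coe.mp ha) h).symm
  -- chain of inequalities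
  have step1 : ∑ x ∈ S, 1/(Fl x)^α ≤
      ∑ x ∈ S, 16 * ∑ y ∈ Finset.Ico x (x + Mg β x), 1/Fl y := by
    refine Finset.sum_le_sum ?_
    intro x hx
    exact per_element hβ0 hα (hx3S x hx) (memB x hx)
  have step2 : ∑ x ∈ S, ∑ y ∈ Finset.Ico x (x + Mg β x), (1/Fl y) =
      ∑ y ∈ S.biUnion (fun x => Finset.Ico x (x + Mg β x)), 1/Fl y :=
    (Finset.sum_biUnion hdisj).symm
  have hsubset : S.biUnion (fun x => Finset.Ico x (x + Mg β x)) ⊆ Finset.Ico (p+1) (2*q) := by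
    intro y hy
    rw [Finset.mem_biUnion] at hy
    obtain ⟨x, hxS, hyJ⟩ := hy
    rw [Finset.mem_Ico] at hyJ ⊢
    obtain ⟨hpx, hxq, _⟩ := memS x hxS
    have hMx : Mg β x ≤ x := Mg_le_self (by omega)
    omega
  have hFl_nonneg : ∀ y : ℕ, 0 ≤ 1/Fl y := by
    intro y
    rcases le_or_gt 3 y with h | h
    · have := Fl_pos h
      positivity
    · unfold Fl
      have : (0:ℝ) ≤ (y:ℝ) := by positivity
      have hl : 0 ≤ Real.log ((y:ℝ)+1) := Real.log_nonneg (by push_cast; linarith)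
      positivity
  have step3 : ∑ y ∈ S.biUnion (fun x => Finset.Ico x (x + Mg β x)), 1/Fl y ≤
      ∑ y ∈ Finset.Ico (p+1) (2*q), 1/Fl y :=
    Finset.sum_le_sum_of_subset_of_nonneg hsubset (fun y _ _ => hFl_nonneg y)
  -- telescoping
  obtain ⟨g, hg⟩ : ∃ g : ℕ → ℝ, g = fun n : ℕ => Real.log (Real.log (n:ℝ)) := ⟨_, rfl⟩
  have step4 : ∑ y ∈ Finset.Ico (p+1) (2*q), 1/Fl y ≤ 2 * (g (2*q) - g (p+1)) := by
    have htel : ∀ y ∈ Finset.Ico (p+1) (2*q), 1/Fl y ≤ 2*(g (y+1) - g y) := by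
      intro y hy
      rw [Finset.mem_Ico] at hy
      have hy3 : 3 ≤ y := by omega
      have := telescope y hy3
      unfold Fl
      rw [hg]
      push_cast
      convert this using 4
    calc ∑ y ∈ Finset.Ico (p+1) (2*q), 1/Fl y
        ≤ ∑ y ∈ Finset.Ico (p+1) (2*q), 2*(g (y+1) - g y) := Finset.sum_le_sum htel
      _ = 2 * ∑ y ∈ Finset.Ico (p+1) (2*q), (g (y+1) - g y) := by rw [Finset.mul_sum]
      _ = 2 * (g (2*q) - g (p+1)) := by
          congr 1
          rw [Finset.sum_Ico_eq_sub _ (by omega : p+1 ≤ 2*q)]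
          rw [Finset.sum_range_sub g, Finset.sum_range_sub g]
          ring
  -- numeric bound
  have hlogp1 : 1 < Real.log ((p:ℝ)+1) := by
    refine (Real.lt_log_iff_exp_lt (by linarith)).mpr ?_
    linarith
  have hq1 : (1:ℝ) ≤ (q:ℝ) := by exact_mod_cast (by omega : 1 ≤ q)
  have hqR : (q:ℝ) ≤ R * Real.log R + 1 := by
    rw [hq]
    push_cast
    have : (⌊R * Real.log R⌋₊ : ℝ) ≤ R * Real.log R := Nat.floor_le (by positivity)
    linarith
  have h2qR : 2*(q:ℝ) ≤ R^3 := by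
    have hlRs : Real.log R ≤ R - 1 := Real.log_le_sub_one_of_pos hRpos
    have h1 : R * Real.log R ≤ R * (R - 1) := by nlinarith
    have h2 : 96 * R^2 ≤ R * R^2 := by nlinarith
    nlinarith [sq_nonneg R]
  have hq3 : (3:ℝ) ≤ (q:ℝ) := by exact_mod_cast (by omega : 3 ≤ q)
  have hlog2q : Real.log (2*(q:ℝ)) ≤ 3 * Real.log R := by
    calc Real.log (2*(q:ℝ)) ≤ Real.log (R^3) := Real.log_le_log (by linarith) h2qR
      _ = 3 * Real.log R := by rw [Real.log_pow]; norm_num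
  have hlogReq : Real.log R = 2*Real.log (p:ℝ) + L := by
    rw [hR, Real.log_div (by positivity) (ne_of_gt hδ0), Real.log_pow, hL, one_div,
      Real.log_inv]
    push_cast
    ring
  have hlogple : Real.log (p:ℝ) ≤ Real.log ((p:ℝ)+1) := Real.log_le_log (by linarith) (by linarith)
  have hmain2 : Real.log (2*(q:ℝ)) ≤ (6 + 5*L) * Real.log ((p:ℝ)+1) := by
    have h1 : 3 * Real.log R = 6 * Real.log (p:ℝ) + 3*L := by rw [hlogReq]; ring
    have h2 : 6 * Real.log (p:ℝ) ≤ 6 * Real.log ((p:ℝ)+1) := by linarith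
    have h3 : 3*L ≤ 5*L * Real.log ((p:ℝ)+1) := by nlinarith
    calc Real.log (2*(q:ℝ)) ≤ 3 * Real.log R := hlog2q
      _ = 6 * Real.log (p:ℝ) + 3*L := h1
      _ ≤ 6 * Real.log ((p:ℝ)+1) + 5*L*Real.log ((p:ℝ)+1) := by linarith
      _ = (6 + 5*L) * Real.log ((p:ℝ)+1) := by ring
  have hlog2qpos : 0 < Real.log (2*(q:ℝ)) := Real.log_pos (by linarith)
  have hfinal : g (2*q) - g (p+1) ≤ Real.log (6+5*L) := by
    have h1 : Real.log (Real.log (2*(q:ℝ))) ≤ Real.log ((6+5*L) * Real.log ((p:ℝ)+1)) :=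
      Real.log_le_log hlog2qpos hmain2
    have hsplit : Real.log ((6+5*L) * Real.log ((p:ℝ)+1))
        = Real.log (6+5*L) + Real.log (Real.log ((p:ℝ)+1)) :=
      Real.log_mul (by intro hcon; nlinarith) (by intro hcon; nlinarith)
    rw [hsplit] at h1
    rw [hg]
    have hc1 : ((2*q : ℕ):ℝ) = 2*(q:ℝ) := by push_cast; ring
    have hc2 : ((p+1 : ℕ):ℝ) = (p:ℝ)+1 := by push_cast; ring
    simp only [hc1, hc2]
    linarith
  have hlog65 : Real.log (6+5*L) ≤ 2 + L := by
    have h75 : 6+5*L ≤ 7*L := by linarith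
    have h7 : Real.log 7 ≤ 2 := by
      rw [Real.log_le_iff_le_exp (by norm_num)]
      have : Real.exp 2 = Real.exp 1 * Real.exp 1 := by rw [← Real.exp_add]; norm_num
      nlinarith
    have hlL : Real.log L ≤ L := by
      have := Real.log_le_sub_one_of_pos hLpos
      linarith
    calc Real.log (6+5*L) ≤ Real.log (7*L) := Real.log_le_log (by linarith) h75
      _ = Real.log 7 + Real.log L := Real.log_mul (by norm_num) (ne_of_gt hLpos)
      _ ≤ 2 + L := by linarith
  -- assemble
  have hgoal : ∑ x ∈ S, 1/(Fl x)^α ≤ 2^6 * (1 + L) := by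
    have c1 : ∑ x ∈ S, 16 * ∑ y ∈ Finset.Ico x (x + Mg β x), 1/Fl y
        = 16 * ∑ x ∈ S, ∑ y ∈ Finset.Ico x (x + Mg β x), 1/Fl y := by
      rw [Finset.mul_sum]
    have c2 : ∑ x ∈ S, ∑ y ∈ Finset.Ico x (x + Mg β x), (1/Fl y) ≤ 2 * (g (2*q) - g (p+1)) := by
      rw [step2]
      exact le_trans step3 step4
    calc ∑ x ∈ S, 1/(Fl x)^α
        ≤ ∑ x ∈ S, 16 * ∑ y ∈ Finset.Ico x (x + Mg β x), 1/Fl y := step1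
      _ = 16 * ∑ x ∈ S, ∑ y ∈ Finset.Ico x (x + Mg β x), 1/Fl y := c1
      _ ≤ 16 * (2 * (g (2*q) - g (p+1))) := by linarith
      _ ≤ 16 * (2 * Real.log (6+5*L)) := by linarith
      _ ≤ 16 * (2 * (2+L)) := by linarith
      _ ≤ 2^6 * (1 + L) := by nlinarith
  exact hgoal
end

section
/- Let ξ be δ-badly approximable with 0 < δ < 1/2, β ∈ [0,1], α = 1 − β, and p a positive integer. Then for every integer ν ≥ 0, the number of integers x with 2^ν·p < x ≤ 2^{ν+1}·p and ‖xξ‖ ≤ δ/(2^ν p · log(2^ν p + 1))^β is at most (24δ + 2)·(2^ν p)^α / (log(2^ν p + 1))^β. -/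
set_option maxHeartbeats 4000000


open Real

lemma nint_le_abs_sub (t : ℝ) (z : ℤ) : nint t ≤ |t - z| := round_le t z

lemma abs_sub_le_nint {t : ℝ} {z : ℤ} (h : |t - (z:ℝ)| < 1/2) : |t - (z:ℝ)| ≤ nint t := by
  unfold nint
  rcases eq_or_ne (round t) z with he | hne
  · rw [he]
  · have hz : round t - z ≠ 0 := sub_ne_zero.mpr hne
    have h0 : (1:ℤ) ≤ |round t - z| := Int.one_le_abs hz
    have h1 : (1:ℝ) ≤ |((round t : ℝ)) - (z:ℝ)| := by
      have : ((1:ℤ):ℝ) ≤ ((|round t - z| : ℤ) : ℝ) := by exact_mod_cast h0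
      push_cast at this
      simpa using this
    have h2 : |((round t:ℝ)) - z| ≤ |t - z| + |t - round t| := by
      calc |((round t:ℝ)) - z| = |(t - z) - (t - round t)| := by ring_nf
        _ ≤ |t - z| + |t - round t| := abs_sub _ _
    linarith

theorem stmt5 (ξ δ α β : ℝ) (hδ0 : 0 < δ) (hδ1 : δ < 1/2)
    (hbad : ∀ p : ℕ, 0 < p → δ ≤ (p : ℝ) * nint ((p : ℝ) * ξ))
    (hβ0 : 0 ≤ β) (hβ1 : β ≤ 1) (hα : α = 1 - β)
    (p : ℕ) (hp : 0 < p) (ν : ℕ) :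
    (((Finset.Ioc (2 ^ ν * p) (2 ^ (ν + 1) * p)).filter
        (fun x : ℕ => nint ((x : ℝ) * ξ)
          ≤ δ / (((2 ^ ν * p : ℕ) : ℝ) * Real.log (((2 ^ ν * p : ℕ) : ℝ) + 1)) ^ β)).card : ℝ)
      ≤ (24 * δ + 2) * (((2 ^ ν * p : ℕ) : ℝ)) ^ α
          / (Real.log (((2 ^ ν * p : ℕ) : ℝ) + 1)) ^ β := by
  have h2q : 2 ^ (ν + 1) * p = 2 * (2 ^ ν * p) := by ring
  rw [h2q]
  set q : ℕ := 2 ^ ν * p with hq_def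
  have hq : 0 < q := by positivity
  set Q : ℝ := (q : ℝ) with hQ_def
  have hQ1 : (1:ℝ) ≤ Q := by rw [hQ_def]; exact_mod_cast hq
  have hQ0 : (0:ℝ) < Q := by linarith
  set L : ℝ := Real.log (Q + 1) with hL_def
  have hL : 0 < L := Real.log_pos (by linarith)
  set D : ℝ := (Q * L) ^ β with hD_def
  have hQL : 0 < Q * L := by positivity
  have hD : 0 < D := Real.rpow_pos_of_pos hQL β
  set ε : ℝ := δ / D with hε_def
  have hε : 0 < ε := by positivity
  set S : Finset ℕ := (Finset.Ioc q (2 * q)).filter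
      (fun x : ℕ => nint ((x : ℝ) * ξ) ≤ ε) with hS_def
  -- rewrite RHS
  have hRHS : (24 * δ + 2) * Q ^ α / L ^ β = (24 * δ + 2) * (Q / D) := by
    have h1 : Q ^ α = Q / Q ^ β := by
      rw [hα, Real.rpow_sub hQ0, Real.rpow_one]
    have h2 : D = Q ^ β * L ^ β := Real.mul_rpow hQ0.le hL.le
    have hQβ : (0:ℝ) < Q ^ β := Real.rpow_pos_of_pos hQ0 β
    have hLβ : (0:ℝ) < L ^ β := Real.rpow_pos_of_pos hL β
    rw [h1, h2]
    field_simp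
  rw [hRHS]
  have hmem : ∀ x ∈ S, q < x ∧ x ≤ 2 * q ∧ nint ((x : ℝ) * ξ) ≤ ε := by
    intro x hx
    rw [hS_def, Finset.mem_filter, Finset.mem_Ioc] at hx
    tauto
  have hbadd : ∀ x : ℕ, 0 < x → ∀ z : ℤ, δ ≤ (x:ℝ) * |(x:ℝ) * ξ - z| := by
    intro x hx z
    calc δ ≤ (x:ℝ) * nint ((x:ℝ) * ξ) := hbad x hx
      _ ≤ (x:ℝ) * |(x:ℝ) * ξ - z| := by
        have h1 := nint_le_abs_sub ((x:ℝ) * ξ) z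
        have hx0 : (0:ℝ) ≤ (x:ℝ) := by positivity
        nlinarith
  -- from nonemptiness : D ≤ 2Q
  have hc_half : S.Nonempty → D ≤ 2 * Q := by
    rintro ⟨x, hx⟩
    obtain ⟨h1, h2, h3⟩ := hmem x hx
    have hx0 : 0 < x := lt_of_le_of_lt (Nat.zero_le q) h1
    have hx2q : (x:ℝ) ≤ 2 * Q := by
      rw [hQ_def]; exact_mod_cast h2
    have hd1 : δ ≤ (x:ℝ) * ε := by
      calc δ ≤ (x:ℝ) * nint ((x:ℝ) * ξ) := hbad x hx0
        _ ≤ (x:ℝ) * ε := by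
          have hx0' : (0:ℝ) ≤ (x:ℝ) := by positivity
          nlinarith
    have hd2 : δ ≤ 2 * Q * ε := le_trans hd1 (by nlinarith)
    rw [hε_def] at hd2
    have hd3 : δ * D ≤ 2 * Q * δ := by
      have h5 := mul_le_mul_of_nonneg_right hd2 hD.le
      calc δ * D ≤ (2 * Q * (δ / D)) * D := h5
        _ = 2 * Q * δ := by field_simp
    nlinarith
  rcases Nat.lt_or_ge S.card 2 with hk1 | hk2
  · -- card ≤ 1
    interval_cases h : S.card
    · simp only [Nat.cast_zero]
      have : (0:ℝ) < (24 * δ + 2) * (Q / D) := by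
        apply mul_pos (by linarith) (div_pos hQ0 hD)
      linarith
    · have hne : S.Nonempty := Finset.card_pos.mp (by omega)
      have hD2Q := hc_half hne
      simp only [Nat.cast_one]
      have h1 : (1:ℝ)/2 ≤ Q / D := by
        rw [le_div_iff₀ hD]; nlinarith
      nlinarith
  · -- card ≥ 2
    have hne : S.Nonempty := Finset.card_pos.mp (by omega)
    have hq2 : 2 ≤ q := by
      have hcle : S.card ≤ q := by
        calc S.card ≤ (Finset.Ioc q (2*q)).card := Finset.card_filter_le _ _
          _ = q := by rw [Nat.card_Ioc]; omega
      omega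
    by_cases hA : 1 ≤ 4 * Q * ε
    · -- Case A : spacing bound
      set g : ℕ := ⌈D / 2⌉₊ with hg_def
      have hg0 : 0 < g := Nat.ceil_pos.mpr (by positivity)
      have hgD : D / 2 ≤ (g:ℝ) := Nat.le_ceil _
      have hsep : ∀ x ∈ S, ∀ y ∈ S, x < y → g ≤ y - x := by
        intro x hx y hy hxy
        obtain ⟨hx1, hx2, hx3⟩ := hmem x hx
        obtain ⟨hy1, hy2, hy3⟩ := hmem y hy
        have hd0 : 0 < y - x := by omega
        have hcast : (((y - x : ℕ)):ℝ) = (y:ℝ) - (x:ℝ) := by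
          push_cast [Nat.cast_sub hxy.le]; ring
        have hclose : |((y - x : ℕ):ℝ) * ξ - (((round ((y:ℝ)*ξ) - round ((x:ℝ)*ξ) : ℤ)):ℝ)| ≤ 2 * ε := by
          have e1 : ((y - x : ℕ):ℝ) * ξ - (((round ((y:ℝ)*ξ) - round ((x:ℝ)*ξ) : ℤ)):ℝ)
              = ((y:ℝ)*ξ - round ((y:ℝ)*ξ)) - ((x:ℝ)*ξ - round ((x:ℝ)*ξ)) := by
            push_cast [hcast]
            ring
          rw [e1]
          calc |((y:ℝ)*ξ - round ((y:ℝ)*ξ)) - ((x:ℝ)*ξ - round ((x:ℝ)*ξ))|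
              ≤ |(y:ℝ)*ξ - round ((y:ℝ)*ξ)| + |(x:ℝ)*ξ - round ((x:ℝ)*ξ)| := abs_sub _ _
            _ ≤ ε + ε := by
                unfold nint at hy3 hx3
                exact add_le_add hy3 hx3
            _ = 2 * ε := by ring
        have hlow := hbadd (y - x) hd0 (round ((y:ℝ)*ξ) - round ((x:ℝ)*ξ))
        have hDd : D / 2 ≤ ((y - x : ℕ):ℝ) := by
          have hc0 : (0:ℝ) ≤ ((y-x:ℕ):ℝ) := by positivity
          have h1 : δ ≤ ((y-x:ℕ):ℝ) * (2 * ε) := by nlinarith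
          rw [hε_def] at h1
          have h2 : δ * D ≤ ((y-x:ℕ):ℝ) * (2 * δ) := by
            have h5 := mul_le_mul_of_nonneg_right h1 hD.le
            calc δ * D ≤ (((y-x:ℕ):ℝ) * (2 * (δ / D))) * D := h5
              _ = ((y-x:ℕ):ℝ) * (2 * δ) := by field_simp
          nlinarith
        exact Nat.ceil_le.mpr hDd
      -- injection into blocks
      have hcard : S.card ≤ (q - 1) / g + 1 := by
        have hord : ∀ x ∈ S, ∀ y ∈ S, x < y → (x - (q+1))/g ≠ (y - (q+1))/g := by
          intro x hx y hy hlt heq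
          have hs := hsep x hx y hy hlt
          obtain ⟨hx1, hx2, _⟩ := hmem x hx
          obtain ⟨hy1, hy2, _⟩ := hmem y hy
          have h1 : (y - (q+1)) < g * ((y - (q+1))/g) + g := by
            calc (y - (q+1)) = g * ((y - (q+1))/g) + (y - (q+1)) % g :=
                  (Nat.div_add_mod _ g).symm
              _ < g * ((y - (q+1))/g) + g := Nat.add_lt_add_left (Nat.mod_lt _ hg0) _
          rw [← heq] at h1
          have h2 : g * ((x - (q+1))/g) ≤ x - (q+1) := Nat.mul_div_le _ g
          omega
        have hinj : S.card ≤ (Finset.range ((q-1)/g + 1)).card := by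
          apply Finset.card_le_card_of_injOn (fun x => (x - (q+1)) / g)
          · intro x hx
            obtain ⟨hx1, hx2, _⟩ := hmem x hx
            rw [Finset.coe_range, Set.mem_Iio]
            have h3 : x - (q+1) ≤ q - 1 := by omega
            exact Nat.lt_succ_of_le (Nat.div_le_div_right h3)
          · intro x hx y hy hxy
            by_contra hneq
            rcases Nat.lt_or_ge x y with h | h
            · exact hord x hx y hy h hxy
            · have h' : y < x := by omega
              exact hord y hy x hx h' hxy.symm
        simpa using hinj
      have hcardR : (S.card : ℝ) ≤ 2 * (Q / D) + 1 := by
        have h1 : (S.card : ℝ) ≤ (((q-1)/g : ℕ):ℝ) + 1 := by exact_mod_cast hcard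
        have h2 : (((q-1)/g : ℕ):ℝ) ≤ ((q-1 : ℕ):ℝ) / (g:ℝ) := Nat.cast_div_le
        have h3 : ((q-1:ℕ):ℝ) ≤ Q := by
          rw [hQ_def]; exact_mod_cast Nat.sub_le q 1
        have hg0R : (0:ℝ) < (g:ℝ) := by exact_mod_cast hg0
        have h4 : ((q-1:ℕ):ℝ) / (g:ℝ) ≤ Q / (D/2) := by
          have h5 : ((q-1:ℕ):ℝ) / (g:ℝ) ≤ Q / (g:ℝ) := by gcongr
          have h6 : Q / (g:ℝ) ≤ Q / (D/2) := by
            apply div_le_div_of_nonneg_left hQ0.le (by positivity) hgD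
          linarith
        have h7 : Q / (D/2) = 2 * (Q / D) := by
          rw [div_div_eq_mul_div]; ring
        linarith
      have hQε : Q * ε = (Q / D) * δ := by rw [hε_def]; ring
      have hA' : 1 ≤ 4 * ((Q / D) * δ) := by rw [← hQε]; linarith
      nlinarith [div_pos hQ0 hD]
    · -- Case B : rigidity
      push_neg at hA
      have hQ2 : (2:ℝ) ≤ Q := by rw [hQ_def]; exact_mod_cast hq2
      have hL1 : (1:ℝ) ≤ L := by
        have h3 : Real.exp 1 ≤ 3 := by
          have := Real.exp_one_lt_d9
          linarith
        have h4 : (1:ℝ) = Real.log (Real.exp 1) := (Real.log_exp 1).symm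
        rw [h4, hL_def]
        exact Real.log_le_log (Real.exp_pos 1) (by linarith)
      have hD1 : (1:ℝ) ≤ D := Real.one_le_rpow (by nlinarith) hβ0
      have hεδ : ε ≤ δ := by rw [hε_def]; exact div_le_self hδ0.le hD1
      obtain ⟨x₀, hx₀⟩ := hne
      obtain ⟨hx₀1, hx₀2, hx₀3⟩ := hmem x₀ hx₀
      have hx₀0 : 0 < x₀ := by omega
      have hx₀3' : 3 ≤ x₀ := by omega
      have hx₀R : (3:ℝ) ≤ (x₀:ℝ) := by exact_mod_cast hx₀3'
      have hx₀2R : (x₀:ℝ) ≤ 2 * Q := by rw [hQ_def]; exact_mod_cast hx₀2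
      have hx₀Q : Q < (x₀:ℝ) := by rw [hQ_def]; exact_mod_cast hx₀1
      set n₀ : ℤ := round ((x₀:ℝ) * ξ) with hn₀_def
      have hs₀ : |(x₀:ℝ) * ξ - (n₀:ℝ)| ≤ ε := hx₀3
      -- n₀ ≠ 0
      have hn₀ : n₀ ≠ 0 := by
        intro h0
        rw [h0] at hs₀
        simp only [Int.cast_zero, sub_zero] at hs₀
        have hb1 := hbad 1 (by norm_num)
        have h2 : nint (((1:ℕ):ℝ) * ξ) ≤ |ξ| := by
          have := nint_le_abs_sub (((1:ℕ):ℝ) * ξ) 0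
          simpa using this
        have h3 : |(x₀:ℝ) * ξ| = (x₀:ℝ) * |ξ| := by
          rw [abs_mul, abs_of_nonneg (by positivity : (0:ℝ) ≤ (x₀:ℝ))]
        have h4 : (x₀:ℝ) * |ξ| ≤ ε := by rw [← h3]; exact hs₀
        have h5 : δ ≤ |ξ| := by
          have := hb1
          simpa using le_trans this (by simpa using h2)
        nlinarith [abs_nonneg ξ]
      -- gcd setup
      set gg : ℕ := Nat.gcd x₀ n₀.natAbs with hgg_def
      have hgg0 : 0 < gg := Nat.pos_of_ne_zero (fun h => by
        have := Nat.eq_zero_of_gcd_eq_zero_left (hgg_def ▸ h)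
        omega)
      set m : ℕ := x₀ / gg with hm_def
      have hmdvd : gg ∣ x₀ := Nat.gcd_dvd_left _ _
      have hm_mul : m * gg = x₀ := Nat.div_mul_cancel hmdvd
      have hm0 : 0 < m := by
        rcases Nat.eq_zero_or_pos m with h | h
        · rw [h] at hm_mul; omega
        · exact h
      set nz : ℤ := n₀ / gg with hnz_def
      have hggdvdn : (gg:ℤ) ∣ n₀ := by
        apply Int.dvd_natAbs.mp
        exact_mod_cast Nat.gcd_dvd_right x₀ n₀.natAbs
      have hnz_mul : nz * gg = n₀ := Int.ediv_mul_cancel hggdvdn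
      have hcop : Int.gcd (m:ℤ) nz = 1 := by
        have h1 : nz.natAbs * gg = n₀.natAbs := by
          have : (nz * gg).natAbs = n₀.natAbs := by rw [hnz_mul]
          simpa [Int.natAbs_mul] using this
        have h2 : nz.natAbs = n₀.natAbs / gg := by
          rw [← h1, Nat.mul_div_cancel _ hgg0]
        have h3 := Nat.coprime_div_gcd_div_gcd (m := x₀) (n := n₀.natAbs) (hgg_def ▸ hgg0)
        have h4 : Int.gcd (m:ℤ) nz = Nat.gcd m nz.natAbs := by
          simp [Int.gcd]
        rw [h4, h2, hm_def, hgg_def]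
        exact h3
      -- all elements are multiples of m
      have hrel : ∀ y ∈ S, m ∣ y := by
        intro y hy
        obtain ⟨hy1, hy2, hy3⟩ := hmem y hy
        set ny : ℤ := round ((y:ℝ) * ξ) with hny_def
        have hsy : |(y:ℝ) * ξ - (ny:ℝ)| ≤ ε := hy3
        have hyR : (y:ℝ) ≤ 2 * Q := by rw [hQ_def]; exact_mod_cast hy2
        have hy0R : (0:ℝ) ≤ (y:ℝ) := by positivity
        have hA0 : (x₀:ℤ) * ny - (y:ℤ) * n₀ = 0 := by
          have hcastA : (((x₀:ℤ) * ny - (y:ℤ) * n₀ : ℤ):ℝ)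
              = (x₀:ℝ) * ((y:ℝ) * ξ - (ny:ℝ)) * (-1) + (y:ℝ) * ((x₀:ℝ) * ξ - (n₀:ℝ)) := by
            push_cast; ring
          have habs : |(((x₀:ℤ) * ny - (y:ℤ) * n₀ : ℤ):ℝ)| < 1 := by
            rw [hcastA]
            have t1 : |(x₀:ℝ) * ((y:ℝ) * ξ - (ny:ℝ)) * (-1)| ≤ 2 * Q * ε := by
              rw [abs_mul, abs_mul]
              rw [abs_of_nonneg (by positivity : (0:ℝ) ≤ (x₀:ℝ))]
              have : |(-1:ℝ)| = 1 := by norm_num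
              rw [this, mul_one]
              apply mul_le_mul hx₀2R hsy (abs_nonneg _) (by positivity)
            have t2 : |(y:ℝ) * ((x₀:ℝ) * ξ - (n₀:ℝ))| ≤ 2 * Q * ε := by
              rw [abs_mul, abs_of_nonneg hy0R]
              apply mul_le_mul hyR hs₀ (abs_nonneg _) (by positivity)
            calc |(x₀:ℝ) * ((y:ℝ) * ξ - (ny:ℝ)) * (-1) + (y:ℝ) * ((x₀:ℝ) * ξ - (n₀:ℝ))|
                ≤ |(x₀:ℝ) * ((y:ℝ) * ξ - (ny:ℝ)) * (-1)| + |(y:ℝ) * ((x₀:ℝ) * ξ - (n₀:ℝ))| :=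
                  abs_add_le _ _
              _ ≤ 2 * Q * ε + 2 * Q * ε := add_le_add t1 t2
              _ < 1 := by linarith
          have hZ : |(x₀:ℤ) * ny - (y:ℤ) * n₀| < 1 := by exact_mod_cast habs
          exact Int.abs_lt_one_iff.mp hZ
        have h5 : ((m:ℤ) * ny) * (gg:ℤ) = ((y:ℤ) * nz) * (gg:ℤ) := by
          have hmc : (m:ℤ) * (gg:ℤ) = (x₀:ℤ) := by exact_mod_cast hm_mul
          calc ((m:ℤ) * ny) * (gg:ℤ) = ((m:ℤ) * (gg:ℤ)) * ny := by ring
            _ = (x₀:ℤ) * ny := by rw [hmc]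
            _ = (y:ℤ) * n₀ := by omega
            _ = (y:ℤ) * (nz * gg) := by rw [hnz_mul]
            _ = ((y:ℤ) * nz) * (gg:ℤ) := by ring
        have hggne : (gg:ℤ) ≠ 0 := by exact_mod_cast hgg0.ne'
        have h6 : (m:ℤ) * ny = (y:ℤ) * nz := mul_right_cancel₀ hggne h5
        have h7 : (m:ℤ) ∣ (y:ℤ) * nz := ⟨ny, h6.symm⟩
        have h8 : (m:ℤ) ∣ (y:ℤ) :=
          (Int.isCoprime_iff_gcd_eq_one.mpr hcop).dvd_of_dvd_mul_right h7
        exact_mod_cast h8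
      -- the real number w
      set w : ℝ := (m:ℝ) * ξ - (nz:ℝ) with hw_def
      have hggR : (1:ℝ) ≤ (gg:ℝ) := by exact_mod_cast hgg0
      have hmR : (0:ℝ) < (m:ℝ) := by exact_mod_cast hm0
      have hmggR : (m:ℝ) * (gg:ℝ) = (x₀:ℝ) := by exact_mod_cast hm_mul
      have hgw : (gg:ℝ) * w = (x₀:ℝ) * ξ - (n₀:ℝ) := by
        have hnzc : (nz:ℝ) * (gg:ℝ) = (n₀:ℝ) := by exact_mod_cast hnz_mul
        rw [hw_def]
        calc (gg:ℝ) * ((m:ℝ) * ξ - (nz:ℝ)) = ((m:ℝ) * (gg:ℝ)) * ξ - (nz:ℝ) * (gg:ℝ) := by ring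
          _ = (x₀:ℝ) * ξ - (n₀:ℝ) := by rw [hmggR, hnzc]
      have hgwabs : (gg:ℝ) * |w| ≤ ε := by
        have : |(gg:ℝ) * w| ≤ ε := by rw [hgw]; exact hs₀
        rwa [abs_mul, abs_of_nonneg (by positivity : (0:ℝ) ≤ (gg:ℝ))] at this
      have hwlow : δ / (m:ℝ) ≤ |w| := by
        have hb := hbad m hm0
        have h1 : nint ((m:ℝ) * ξ) ≤ |w| := by
          have := nint_le_abs_sub ((m:ℝ) * ξ) nz
          rwa [← hw_def] at this
        rw [div_le_iff₀ hmR]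
        have h2 : δ ≤ (m:ℝ) * |w| := by nlinarith [hb]
        linarith
      -- per element bound
      have hkey : ∀ y ∈ S, ((y / m : ℕ):ℝ) * δ ≤ ε * (m:ℝ) := by
        intro y hy
        obtain ⟨hy1, hy2, hy3⟩ := hmem y hy
        have hdv : m ∣ y := hrel y hy
        have hum : (y / m) * m = y := Nat.div_mul_cancel hdv
        have humR : ((y/m : ℕ):ℝ) * (m:ℝ) = (y:ℝ) := by exact_mod_cast hum
        have hyR : (y:ℝ) ≤ 2 * Q := by rw [hQ_def]; exact_mod_cast hy2
        have hu0 : (0:ℝ) ≤ ((y/m : ℕ):ℝ) := by positivity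
        have hyξ : (y:ℝ) * ξ - ((((y/m : ℕ):ℤ) * nz : ℤ):ℝ) = ((y/m:ℕ):ℝ) * w := by
          push_cast
          rw [hw_def]
          calc (y:ℝ) * ξ - ((y/m:ℕ):ℝ) * (nz:ℝ)
              = (((y/m:ℕ):ℝ) * (m:ℝ)) * ξ - ((y/m:ℕ):ℝ) * (nz:ℝ) := by rw [humR]
            _ = ((y/m:ℕ):ℝ) * ((m:ℝ) * ξ - (nz:ℝ)) := by ring
        have huw : |((y/m:ℕ):ℝ) * w| < 1/2 := by
          rw [abs_mul, abs_of_nonneg hu0]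
          have e : (((y/m:ℕ):ℝ) * |w|) * (x₀:ℝ) = (y:ℝ) * ((gg:ℝ) * |w|) := by
            rw [← hmggR, ← humR]; ring
          have h1 : (((y/m:ℕ):ℝ) * |w|) * (x₀:ℝ) ≤ 2 * Q * ε := by
            rw [e]
            have := mul_le_mul_of_nonneg_left hgwabs (by positivity : (0:ℝ) ≤ (y:ℝ))
            calc (y:ℝ) * ((gg:ℝ) * |w|) ≤ (y:ℝ) * ε := this
              _ ≤ 2 * Q * ε := by nlinarith
          nlinarith [abs_nonneg w, mul_nonneg hu0 (abs_nonneg w)]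
        have h9 : |((y/m:ℕ):ℝ) * w| ≤ nint ((y:ℝ) * ξ) := by
          have := abs_sub_le_nint (t := (y:ℝ) * ξ) (z := ((y/m : ℕ):ℤ) * nz)
            (by rw [hyξ]; exact huw)
          rwa [hyξ] at this
        have h10 : ((y/m:ℕ):ℝ) * |w| ≤ ε := by
          rw [abs_mul, abs_of_nonneg hu0] at h9
          linarith [le_trans h9 hy3]
        have h11 : ((y/m:ℕ):ℝ) * (δ / (m:ℝ)) ≤ ε :=
          le_trans (mul_le_mul_of_nonneg_left hwlow hu0) h10
        calc ((y/m:ℕ):ℝ) * δ = (((y/m:ℕ):ℝ) * (δ / (m:ℝ))) * (m:ℝ) := by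
              field_simp
          _ ≤ ε * (m:ℝ) := mul_le_mul_of_nonneg_right h11 hmR.le
      -- counting
      have hinjS : Set.InjOn (fun y => y / m) S := by
        intro a ha b hb hab
        have hda := hrel a ha
        have hdb := hrel b hb
        simp only at hab
        rw [← Nat.div_mul_cancel hda, ← Nat.div_mul_cancel hdb, hab]
      set S' : Finset ℕ := S.image (fun y => y / m) with hS'_def
      have hcard' : S'.card = S.card := Finset.card_image_of_injOn hinjS
      have hS'mem : ∀ u ∈ S', q / m < u := by
        intro u hu
        rw [hS'_def, Finset.mem_image] at hu
        obtain ⟨y, hy, rfl⟩ := hu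
        obtain ⟨hy1, _, _⟩ := hmem y hy
        have hdv : m ∣ y := hrel y hy
        by_contra hcon
        push_neg at hcon
        have h1 : (y/m) * m ≤ (q/m) * m := Nat.mul_le_mul_right m hcon
        rw [Nat.div_mul_cancel hdv] at h1
        have h2 : (q/m) * m ≤ q := Nat.div_mul_le_self q m
        omega
      have hS'ne : S'.Nonempty := by exact ⟨x₀ / m, Finset.mem_image_of_mem _ hx₀⟩
      set U : ℕ := S'.max' hS'ne with hU_def
      have hUS' : U ∈ S' := S'.max'_mem hS'ne
      obtain ⟨yU, hyU, hyUeq⟩ := Finset.mem_image.mp (hS'_def ▸ hUS')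
      have hsub : S' ⊆ Finset.Ioc (q/m) U := by
        intro u hu
        rw [Finset.mem_Ioc]
        exact ⟨hS'mem u hu, S'.le_max' u hu⟩
      have hcount : S.card ≤ U - q/m := by
        rw [← hcard']
        calc S'.card ≤ (Finset.Ioc (q/m) U).card := Finset.card_le_card hsub
          _ = U - q/m := Nat.card_Ioc _ _
      -- real versions
      have hUδ : (U:ℝ) * δ ≤ ε * (m:ℝ) := by
        have := hkey yU hyU
        rwa [hyUeq] at this
      have hUm : (U:ℝ) * (m:ℝ) ≤ 2 * Q := by
        obtain ⟨_, hy2, _⟩ := hmem yU hyU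
        have hdv : m ∣ yU := hrel yU hyU
        have h1 : U * m = yU := by rw [← hyUeq]; exact Nat.div_mul_cancel hdv
        have h2 : (yU:ℝ) ≤ 2 * Q := by rw [hQ_def]; exact_mod_cast hy2
        calc (U:ℝ) * (m:ℝ) = (yU:ℝ) := by exact_mod_cast h1
          _ ≤ 2 * Q := h2
      have hqmT : Q < (m:ℝ) * ((q/m : ℕ):ℝ) + (m:ℝ) := by
        have h1 : q < m * (q/m) + m := by
          calc q = m * (q/m) + q % m := (Nat.div_add_mod q m).symm
            _ < m * (q/m) + m := Nat.add_lt_add_left (Nat.mod_lt q hm0) _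
        rw [hQ_def]; exact_mod_cast h1
      have hkR : (S.card : ℝ) ≤ (U:ℝ) - ((q/m:ℕ):ℝ) := by
        have h1 : q/m ≤ U := by omega
        have h2 : (S.card:ℝ) ≤ ((U - q/m : ℕ):ℝ) := by exact_mod_cast hcount
        rwa [Nat.cast_sub h1] at h2
      -- final arithmetic
      have hk2R : (2:ℝ) ≤ (S.card:ℝ) := by exact_mod_cast hk2
      have hT0 : (0:ℝ) < Q / (m:ℝ) := by positivity
      have hf1 : ((q/m:ℕ):ℝ) > Q / (m:ℝ) - 1 := by
        rw [gt_iff_lt, sub_lt_iff_lt_add, div_lt_iff₀ hmR]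
        nlinarith
      have hf2 : (U:ℝ) ≤ 2 * (Q / (m:ℝ)) := by
        rw [show 2 * (Q / (m:ℝ)) = 2 * Q / (m:ℝ) by ring, le_div_iff₀ hmR]
        linarith [hUm]
      have hf3 : (Q / (m:ℝ)) * (U:ℝ) ≤ Q / D := by
        have e1 : Q * ε = (Q / D) * δ := by rw [hε_def]; ring
        have h1 : (Q / (m:ℝ)) * ((U:ℝ) * δ) ≤ (Q / (m:ℝ)) * (ε * (m:ℝ)) :=
          mul_le_mul_of_nonneg_left hUδ hT0.le
        have h2 : (Q / (m:ℝ)) * (ε * (m:ℝ)) = Q * ε := by field_simp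
        rw [h2, e1] at h1
        have h3 : (Q / (m:ℝ)) * (U:ℝ) * δ ≤ (Q / D) * δ := by linarith [h1]
        exact le_of_mul_le_mul_right (by linarith) hδ0
      have hT1 : (S.card:ℝ) - 1 ≤ Q / (m:ℝ) := by linarith
      have hU1 : 2 * (S.card:ℝ) - 2 ≤ (U:ℝ) := by linarith
      have hQD : 2 * ((S.card:ℝ) - 1) * ((S.card:ℝ) - 1) ≤ Q / D := by
        have hx1 : (0:ℝ) ≤ (S.card:ℝ) - 1 := by linarith
        have hmul : ((S.card:ℝ) - 1) * (2 * (S.card:ℝ) - 2)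
            ≤ (Q / (m:ℝ)) * (U:ℝ) := by
          apply mul_le_mul hT1 hU1 (by linarith) hT0.le
        linarith [hmul, hf3]
      have hQD0 : (0:ℝ) ≤ Q / D := (div_pos hQ0 hD).le
      have h5 : (0:ℝ) ≤ ((S.card:ℝ) - 2) * (4 * (S.card:ℝ) - 1) :=
        mul_nonneg (by linarith) (by linarith)
      have h6 : (0:ℝ) ≤ δ * (Q / D) := mul_nonneg hδ0.le hQD0
      linarith [hQD, h5, h6]
end

section
/- Let 0 < δ < 1/2, α ∈ [0,1], and let q, x be positive integers with x ≥ (q²/δ)·log(q²/δ) and q ≥ 2. Then 2^{l(q,α)} / 2^{l(x,α)} ≤ 2δ / (x·log(x+1))^α, where l(t,α) = ⌊ log( t^{1+α}(log(t+1))^α / (2δ) ) / log 2 ⌋. -/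
open Real

theorem stmt12 (α δ : ℝ) (hα0 : 0 ≤ α) (hα1 : α ≤ 1) (hδ0 : 0 < δ) (hδ1 : δ < 1/2)
    (q x : ℕ) (hq : 2 ≤ q) (hx : 0 < x)
    (hxq : ((q : ℝ) ^ 2 / δ) * Real.log ((q : ℝ) ^ 2 / δ) ≤ (x : ℝ))
    (lq lx : ℤ)
    (hlq : lq = ⌊Real.log ((q : ℝ) ^ (1 + α) * (Real.log ((q : ℝ) + 1)) ^ α / (2 * δ))
                  / Real.log 2⌋)
    (hlx : lx = ⌊Real.log ((x : ℝ) ^ (1 + α) * (Real.log ((x : ℝ) + 1)) ^ α / (2 * δ))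
                  / Real.log 2⌋) :
    (2 : ℝ) ^ lq / (2 : ℝ) ^ lx ≤ 2 * δ / (((x : ℝ) * Real.log ((x : ℝ) + 1)) ^ α) := by
  have hQ2 : (2:ℝ) ≤ (q:ℝ) := by exact_mod_cast hq
  have hQ0 : (0:ℝ) < (q:ℝ) := by linarith
  have hX1 : (1:ℝ) ≤ (x:ℝ) := by exact_mod_cast hx
  have hX0 : (0:ℝ) < (x:ℝ) := by linarith
  set Q := (q:ℝ) with hQdef
  set X := (x:ℝ) with hXdef
  have hlQ1 : 1 ≤ Real.log (Q + 1) := by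
    have h9 := Real.exp_one_lt_d9
    have hE : Real.exp 1 ≤ Q + 1 := by norm_num at h9 ⊢; linarith
    calc (1:ℝ) = Real.log (Real.exp 1) := (Real.log_exp 1).symm
      _ ≤ Real.log (Q + 1) := Real.log_le_log (Real.exp_pos 1) hE
  have hlQ0 : 0 < Real.log (Q + 1) := by linarith
  have hlX0 : 0 < Real.log (X + 1) := Real.log_pos (by linarith)
  set lQ := Real.log (Q + 1) with hlQdef
  set lX := Real.log (X + 1) with hlXdef
  set A := Q ^ (1 + α) * lQ ^ α / (2 * δ) with hAdef
  set B := X ^ (1 + α) * lX ^ α / (2 * δ) with hBdef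
  have hQp : 0 < Q ^ (1 + α) := Real.rpow_pos_of_pos hQ0 _
  have hXp : 0 < X ^ (1 + α) := Real.rpow_pos_of_pos hX0 _
  have hlQp : 0 < lQ ^ α := Real.rpow_pos_of_pos hlQ0 _
  have hlXp : 0 < lX ^ α := Real.rpow_pos_of_pos hlX0 _
  have hA0 : 0 < A := by positivity
  have hB0 : 0 < B := by positivity
  have hlog2 : (0:ℝ) < Real.log 2 := Real.log_pos one_lt_two
  -- upper bound for 2^lq
  have h2lq : (2:ℝ) ^ lq ≤ A := by
    have hle : (lq : ℝ) ≤ Real.log A / Real.log 2 := by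
      rw [hlq]; exact Int.floor_le _
    calc (2:ℝ) ^ lq = (2:ℝ) ^ ((lq : ℝ)) := (Real.rpow_intCast 2 lq).symm
      _ ≤ (2:ℝ) ^ (Real.log A / Real.log 2) :=
          (Real.rpow_le_rpow_left_iff one_lt_two).mpr hle
      _ = A := by
          rw [Real.log_div_log]
          exact Real.rpow_logb (by norm_num) (by norm_num) hA0
  -- lower bound for 2^lx
  have h2lx : B / 2 ≤ (2:ℝ) ^ lx := by
    have hle : Real.log B / Real.log 2 - 1 ≤ (lx : ℝ) := by
      rw [hlx]; exact le_of_lt (Int.sub_one_lt_floor _)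
    calc B / 2 = (2:ℝ) ^ (Real.log B / Real.log 2) / (2:ℝ) ^ (1:ℝ) := by
          rw [Real.rpow_one, Real.log_div_log,
            Real.rpow_logb (by norm_num) (by norm_num) hB0]
      _ = (2:ℝ) ^ (Real.log B / Real.log 2 - 1) := (Real.rpow_sub two_pos _ _).symm
      _ ≤ (2:ℝ) ^ ((lx : ℝ)) := (Real.rpow_le_rpow_left_iff one_lt_two).mpr hle
      _ = (2:ℝ) ^ lx := Real.rpow_intCast 2 lx
  have hB2 : 0 < B / 2 := by linarith
  have h2lxpos : (0:ℝ) < (2:ℝ) ^ lx := zpow_pos two_pos lx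
  -- key inequality
  have key : Q ^ (1 + α) * lQ ^ α ≤ δ * X := by
    have h1 : Q ^ (1 + α) ≤ Q ^ (2:ℝ) :=
      Real.rpow_le_rpow_of_exponent_le (by linarith) (by linarith)
    have h1' : Q ^ ((2:ℝ)) = Q ^ 2 := by
      rw [show ((2:ℝ)) = ((2:ℕ):ℝ) by norm_num, Real.rpow_natCast]
    have h2 : lQ ^ α ≤ lQ := by
      calc lQ ^ α ≤ lQ ^ (1:ℝ) := Real.rpow_le_rpow_of_exponent_le hlQ1 hα1
        _ = lQ := Real.rpow_one lQ
    have h3 : Q + 1 ≤ Q ^ 2 / δ := by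
      rw [le_div_iff₀ hδ0]; nlinarith
    have h4 : lQ ≤ Real.log (Q ^ 2 / δ) := Real.log_le_log (by linarith) h3
    have h5 : Q ^ (1 + α) * lQ ^ α ≤ Q ^ 2 * Real.log (Q ^ 2 / δ) := by
      have := mul_le_mul (h1.trans_eq h1') (h2.trans h4) hlQp.le (by positivity)
      exact this
    have h6 : Q ^ 2 * Real.log (Q ^ 2 / δ) = δ * (Q ^ 2 / δ * Real.log (Q ^ 2 / δ)) := by
      field_simp
    have h7 : δ * (Q ^ 2 / δ * Real.log (Q ^ 2 / δ)) ≤ δ * X :=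
      mul_le_mul_of_nonneg_left hxq hδ0.le
    linarith
  -- final computation
  have hXln : 0 < (X * lX) ^ α := Real.rpow_pos_of_pos (by positivity) _
  calc (2:ℝ) ^ lq / (2:ℝ) ^ lx ≤ A / (B / 2) := div_le_div₀ hA0.le h2lq hB2 h2lx
    _ ≤ 2 * δ / ((X * lX) ^ α) := by
        rw [div_le_div_iff₀ hB2 hXln]
        have e1 : (X * lX) ^ α = X ^ α * lX ^ α := Real.mul_rpow hX0.le hlX0.le
        have e2 : X ^ (1 + α) = X * X ^ α := by
          rw [Real.rpow_add hX0, Real.rpow_one]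
        have hXa : 0 < X ^ α := Real.rpow_pos_of_pos hX0 _
        rw [hAdef, hBdef, e1, e2]
        have hRHS : 2 * δ * (X * X ^ α * lX ^ α / (2 * δ) / 2)
            = X * X ^ α * lX ^ α / 2 := by
          field_simp
        rw [hRHS]
        have hLHS : Q ^ (1 + α) * lQ ^ α / (2 * δ) * (X ^ α * lX ^ α)
            = Q ^ (1 + α) * lQ ^ α * (X ^ α * lX ^ α) / (2 * δ) := by ring
        rw [hLHS]
        have h1 : Q ^ (1 + α) * lQ ^ α * (X ^ α * lX ^ α)
            ≤ δ * X * (X ^ α * lX ^ α) :=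
          mul_le_mul_of_nonneg_right key (by positivity)
        have h2 : Q ^ (1 + α) * lQ ^ α * (X ^ α * lX ^ α) / (2 * δ)
            ≤ δ * X * (X ^ α * lX ^ α) / (2 * δ) := by
          apply div_le_div_of_nonneg_right h1 (by positivity)
        have h3 : δ * X * (X ^ α * lX ^ α) / (2 * δ) = X * X ^ α * lX ^ α / 2 := by
          field_simp
        linarith
end
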